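/- Let δ > 0 and let M₁, M₂, …, be independent 1-subgaussian real random variables with zero means; set μ̂ₙ = (1/n)·∑_{s=1}^n M_s. Then for any positive integers T₁ ≤ T, ∑_{n=1}^T P(μ̂ₙ + √((4/n)·log⁺(T₁/n)) ≥ δ) ≤ 1 + 4·log⁺(T₁δ²)/δ² + 3/δ² + √(8π·log⁺(T₁δ²))/δ². -/

import Mathlib

open MeasureTheory ProbabilityTheory Real
open scoped ENNReal

/-- `Z` is 1-subgaussian: `E[exp(λZ − λE[Z])] ≤ exp(λ²/2)` for all `λ ∈ ℝ`
(with the integrability of the moment generating function). -/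
def IsOneSubgaussian {Ω : Type*} [MeasurableSpace Ω] (μ : Measure Ω) (Z : Ω → ℝ) : Prop :=
  Integrable Z μ ∧ ∀ l : ℝ,
    Integrable (fun ω => Real.exp (l * Z ω - l * (∫ ω', Z ω' ∂μ))) μ ∧
    (∫ ω, Real.exp (l * Z ω - l * (∫ ω', Z ω' ∂μ)) ∂μ) ≤ Real.exp (l ^ 2 / 2)

/-- `log⁺ x = max {0, log x}`. -/
noncomputable def logPlus (x : ℝ) : ℝ := max 0 (Real.log x)

lemma logPlus_nonneg' (x : ℝ) : 0 ≤ logPlus x := le_max_left _ _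

lemma logPlus_mono' {x y : ℝ} (hx : 0 < x) (hxy : x ≤ y) : logPlus x ≤ logPlus y :=
  max_le_max le_rfl (Real.log_le_log hx hxy)

lemma sq_le_imp' {x y : ℝ} (hx : 0 ≤ x) (hy : 0 ≤ y) (h : x ^ 2 ≤ y ^ 2) : x ≤ y := by
  nlinarith

lemma halfGaussMoment' : ∫ x in Set.Ioi (0:ℝ), x * Real.exp (-(1/2) * x ^ 2) = 1 := by
  have h := MeasureTheory.integral_Ioi_of_hasDerivAt_of_tendsto
    (f := fun x : ℝ => -Real.exp (-(1/2) * x ^ 2))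
    (f' := fun x : ℝ => x * Real.exp (-(1/2) * x ^ 2)) (a := 0) (m := 0)
    ?_ ?_ ?_ ?_
  · simpa using h
  · exact (((hasDerivAt_pow 2 (0:ℝ)).const_mul (-(1/2))).exp.neg).continuousAt.continuousWithinAt
  · intro x _
    have : HasDerivAt (fun x : ℝ => -Real.exp (-(1/2) * x ^ 2))
        (-(Real.exp (-(1/2) * x ^ 2) * (-(1/2) * (2 * x ^ 1)))) x :=
      (((hasDerivAt_pow 2 x).const_mul (-(1/2))).exp).neg
    refine this.congr_deriv ?_
    ring
  · exact (integrable_mul_exp_neg_mul_sq (by norm_num : (0:ℝ) < 1/2)).integrableOn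
  · have h1 : Filter.Tendsto (fun x : ℝ => -(1/2) * x ^ 2) Filter.atTop Filter.atBot := by
      apply Filter.Tendsto.const_mul_atTop_of_neg (by norm_num)
      exact Filter.tendsto_pow_atTop two_ne_zero
    have := (Real.tendsto_exp_atBot.comp h1).neg
    simpa using this

lemma tailIntegral' (δ c : ℝ) (hδ : 0 < δ) (hc : 0 ≤ c) {a b : ℝ} (ha : 0 < a) (hab : a ≤ b)
    (hca : c ≤ Real.sqrt a * δ) :
    ∫ x in a..b, Real.exp (-(1/2) * (Real.sqrt x * δ - c) ^ 2)
      ≤ 2 / δ ^ 2 + c * Real.sqrt (2 * Real.pi) / δ ^ 2 := by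
  set F : ℝ → ℝ := fun u => (2/δ^2) * ((u + c) * Real.exp (-(1/2) * u ^ 2)) with hF
  set φ : ℝ → ℝ := fun x => Real.sqrt x * δ - c with hφ
  have hIcc : Set.uIcc a b = Set.Icc a b := Set.uIcc_of_le hab
  have hsq : ∀ x ∈ Set.uIcc a b, Real.sqrt x ≠ 0 := by
    intro x hx
    rw [hIcc] at hx
    exact (Real.sqrt_pos.2 (lt_of_lt_of_le ha hx.1)).ne'
  have hφd : ∀ x ∈ Set.uIcc a b, HasDerivAt φ (1/(2*Real.sqrt x)*δ) x := by
    intro x hx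
    rw [hIcc] at hx
    exact ((Real.hasDerivAt_sqrt (lt_of_lt_of_le ha hx.1).ne').mul_const δ).sub_const c
  have hFcont : Continuous F := by fun_prop
  have hφ'cont : ContinuousOn (fun x => 1/(2*Real.sqrt x)*δ) (Set.uIcc a b) := by
    apply ContinuousOn.mul _ continuousOn_const
    apply ContinuousOn.div continuousOn_const
      (continuousOn_const.mul Real.continuous_sqrt.continuousOn)
    intro x hx
    have := hsq x hx
    exact mul_ne_zero two_ne_zero this
  have key : ∫ x in a..b, Real.exp (-(1/2) * (Real.sqrt x * δ - c) ^ 2)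
      = ∫ u in φ a..φ b, F u := by
    rw [← intervalIntegral.integral_comp_smul_deriv hφd hφ'cont hFcont]
    apply intervalIntegral.integral_congr
    intro x hx
    have hx0 : Real.sqrt x ≠ 0 := hsq x hx
    simp only [Function.comp, smul_eq_mul, hF, hφ]
    have : Real.sqrt x * δ - c + c = Real.sqrt x * δ := by ring
    rw [this]
    field_simp
  rw [key]
  have hφab : φ a ≤ φ b := by
    have := Real.sqrt_le_sqrt hab
    simp only [hφ]
    nlinarith [Real.sqrt_nonneg a]
  have hφa0 : 0 ≤ φ a := by simp only [hφ]; linarith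
  rw [intervalIntegral.integral_of_le hφab]
  have hintE : Integrable (fun u : ℝ => Real.exp (-(1/2) * u ^ 2)) :=
    integrable_exp_neg_mul_sq (by norm_num)
  have hintUE : Integrable (fun u : ℝ => u * Real.exp (-(1/2) * u ^ 2)) :=
    integrable_mul_exp_neg_mul_sq (by norm_num)
  have hintF : Integrable F := by
    have : F = fun u => (2/δ^2) * (u * Real.exp (-(1/2) * u ^ 2)
        + c * Real.exp (-(1/2) * u ^ 2)) := by
      funext u; simp only [hF]; ring
    rw [this]
    exact ((hintUE.add (hintE.const_mul c)).const_mul _)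
  have step2 : ∫ u in Set.Ioc (φ a) (φ b), F u ≤ ∫ u in Set.Ioi (0:ℝ), F u := by
    apply setIntegral_mono_set hintF.integrableOn
    · filter_upwards [ae_restrict_mem measurableSet_Ioi] with u hu
      have hu0 : (0:ℝ) < u := hu
      have : 0 ≤ u + c := by linarith
      have := Real.exp_nonneg (-(1/2) * u ^ 2)
      simp only [hF]
      positivity
    · exact Filter.Eventually.of_forall fun u hu => lt_of_le_of_lt hφa0 hu.1
  refine le_trans step2 ?_
  have hval : ∫ u in Set.Ioi (0:ℝ), F u = 2/δ^2 + c * Real.sqrt (2*Real.pi) / δ^2 := by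
    have hsplit : ∫ u in Set.Ioi (0:ℝ), F u
        = (2/δ^2) * ((∫ u in Set.Ioi (0:ℝ), u * Real.exp (-(1/2) * u ^ 2))
          + c * ∫ u in Set.Ioi (0:ℝ), Real.exp (-(1/2) * u ^ 2)) := by
      rw [← integral_const_mul c, ← integral_add hintUE.integrableOn
        ((hintE.const_mul c).integrableOn), ← integral_const_mul (2/δ^2)]
      congr 1; funext u; simp only [hF]; ring
    rw [hsplit, halfGaussMoment']
    have hg : ∫ u in Set.Ioi (0:ℝ), Real.exp (-(1/2) * u ^ 2) = Real.sqrt (2*Real.pi) / 2 := by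
      rw [show (2:ℝ)*Real.pi = Real.pi/(1/2) by ring]
      exact integral_gaussian_Ioi _
    rw [hg]
    field_simp
  rw [hval]

lemma tailSum' (T n₁ : ℕ) (δ c : ℝ) (hδ : 0 < δ) (hc : 0 ≤ c)
    (hn₁pos : 0 < n₁) (hcn₁ : c ≤ Real.sqrt n₁ * δ) :
    ∑ n ∈ Finset.Icc (n₁+1) T, Real.exp (-(1/2) * (Real.sqrt n * δ - c) ^ 2)
      ≤ 2 / δ ^ 2 + c * Real.sqrt (2 * Real.pi) / δ ^ 2 := by
  rcases le_or_gt T n₁ with hT | hT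
  · rw [Finset.Icc_eq_empty (by omega)]
    simp only [Finset.sum_empty]
    positivity
  set f : ℝ → ℝ := fun x => Real.exp (-(1/2) * (Real.sqrt x * δ - c) ^ 2) with hf
  have hmono : ∀ x y : ℝ, (n₁:ℝ) ≤ x → x ≤ y → f y ≤ f x := by
    intro x y hx hxy
    have hsx : c ≤ Real.sqrt x * δ :=
      le_trans hcn₁ (mul_le_mul_of_nonneg_right (Real.sqrt_le_sqrt hx) hδ.le)
    have hsxy : Real.sqrt x * δ - c ≤ Real.sqrt y * δ - c := by
      have := Real.sqrt_le_sqrt hxy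
      nlinarith
    have hsq : (Real.sqrt x * δ - c) ^ 2 ≤ (Real.sqrt y * δ - c) ^ 2 :=
      pow_le_pow_left₀ (by linarith) hsxy 2
    exact Real.exp_le_exp.2 (by linarith)
  have hreindex : ∑ n ∈ Finset.Icc (n₁+1) T, f (n:ℝ)
      = ∑ i ∈ Finset.range (T - n₁), f ((n₁:ℝ) + ((i:ℕ) + 1 : ℕ)) := by
    rw [← Finset.Ico_add_one_right_eq_Icc, Finset.sum_Ico_eq_sum_range]
    have : T + 1 - (n₁ + 1) = T - n₁ := by omega
    rw [this]
    apply Finset.sum_congr rfl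
    intro i _
    congr 1
    push_cast
    ring
  have hanti : AntitoneOn f (Set.Icc (n₁:ℝ) ((n₁:ℝ) + (T - n₁ : ℕ))) :=
    fun x hx y hy hxy => hmono x y hx.1 hxy
  have hint := hanti.sum_le_integral
  rw [hreindex]
  refine le_trans hint ?_
  have hTcast : (n₁:ℝ) + ((T - n₁ : ℕ) : ℝ) = (T:ℝ) := by
    rw [Nat.cast_sub hT.le]; ring
  rw [hTcast]
  exact tailIntegral' δ c hδ hc (by exact_mod_cast hn₁pos) (by exact_mod_cast hT.le) hcn₁

lemma chernoff' {Ω : Type*} [MeasurableSpace Ω] (μ : Measure Ω) [IsProbabilityMeasure μ]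
    (M : ℕ → Ω → ℝ) (hmeas : ∀ i, Measurable (M i))
    (hindep : iIndepFun M μ)
    (hsub : ∀ i, IsOneSubgaussian μ (M i))
    (hmean : ∀ i, (∫ ω, M i ω ∂μ) = 0)
    (n : ℕ) (hn : 0 < n) (a : ℝ) (ha : 0 ≤ a) :
    μ {ω | a ≤ ∑ s ∈ Finset.range n, M s ω}
      ≤ ENNReal.ofReal (Real.exp (-(1/2) * (a ^ 2 / n))) := by
  have hint : ∀ i (t : ℝ), Integrable (fun ω => Real.exp (t * M i ω)) μ := by
    intro i t
    have := ((hsub i).2 t).1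
    simpa [hmean i] using this
  have hmgf : ∀ i (t : ℝ), mgf (M i) μ t ≤ Real.exp (t ^ 2 / 2) := by
    intro i t
    have := ((hsub i).2 t).2
    simpa [mgf, hmean i] using this
  set t : ℝ := a / n with ht
  have htn : 0 ≤ t := div_nonneg ha (Nat.cast_nonneg n)
  have hintsum : Integrable (fun ω => Real.exp (t * (∑ i ∈ Finset.range n, M i) ω)) μ :=
    hindep.integrable_exp_mul_sum hmeas (fun i _ => hint i t)
  have hch := measure_ge_le_exp_mul_mgf (X := ∑ i ∈ Finset.range n, M i) (μ := μ) a htn hintsum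
  have hset : {ω | a ≤ ∑ s ∈ Finset.range n, M s ω}
      = {ω | a ≤ (∑ i ∈ Finset.range n, M i) ω} := by
    simp [Finset.sum_apply]
  have hmgfsum : mgf (∑ i ∈ Finset.range n, M i) μ t ≤ Real.exp (n * t ^ 2 / 2) := by
    rw [hindep.mgf_sum hmeas]
    calc ∏ i ∈ Finset.range n, mgf (M i) μ t
        ≤ ∏ i ∈ Finset.range n, Real.exp (t ^ 2 / 2) :=
          Finset.prod_le_prod (fun i _ => mgf_nonneg) (fun i _ => hmgf i t)
      _ = Real.exp (n * t ^ 2 / 2) := by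
          rw [Finset.prod_const, ← Real.exp_nat_mul, Finset.card_range]
          ring_nf
  have hnn : (0:ℝ) < n := Nat.cast_pos.2 hn
  have hbound : (μ {ω | a ≤ ∑ s ∈ Finset.range n, M s ω}).toReal
      ≤ Real.exp (-(1/2) * (a ^ 2 / n)) := by
    rw [hset]
    refine hch.trans ?_
    calc Real.exp (-t * a) * mgf (∑ i ∈ Finset.range n, M i) μ t
        ≤ Real.exp (-t * a) * Real.exp (n * t ^ 2 / 2) := by
          exact mul_le_mul_of_nonneg_left hmgfsum (Real.exp_nonneg _)
      _ = Real.exp (-(1/2) * (a ^ 2 / n)) := by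
          rw [← Real.exp_add]
          congr 1
          rw [ht]
          field_simp [ht]
          ring
  calc μ {ω | a ≤ ∑ s ∈ Finset.range n, M s ω}
      = ENNReal.ofReal (μ {ω | a ≤ ∑ s ∈ Finset.range n, M s ω}).toReal := by
        rw [ENNReal.ofReal_toReal (measure_ne_top μ _)]
    _ ≤ ENNReal.ofReal (Real.exp (-(1/2) * (a ^ 2 / n))) := ENNReal.ofReal_le_ofReal hbound

/-- Let `δ > 0`, `M₁, M₂, …` independent 1-subgaussian with zero means and
`μ̂ₙ = (1/n)·∑_{s=1}^n M_s`.  For positive integers `T₁ ≤ T`,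
`∑_{n=1}^T P(μ̂ₙ + √((4/n)·log⁺(T₁/n)) ≥ δ)
  ≤ 1 + 4·log⁺(T₁δ²)/δ² + 3/δ² + √(8π·log⁺(T₁δ²))/δ²`. -/
theorem stmt2 {Ω : Type*} [MeasurableSpace Ω] (μ : Measure Ω) [IsProbabilityMeasure μ]
    (M : ℕ → Ω → ℝ) (hmeas : ∀ i, Measurable (M i))
    (hindep : iIndepFun M μ)
    (hsub : ∀ i, IsOneSubgaussian μ (M i))
    (hmean : ∀ i, (∫ ω, M i ω ∂μ) = 0)
    (δ : ℝ) (hδ : 0 < δ)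
    (T T₁ : ℕ) (hT₁ : 0 < T₁) (hT₁T : T₁ ≤ T) :
    (∑ n ∈ Finset.Icc 1 T,
        μ {ω | δ ≤ (∑ s ∈ Finset.range n, M s ω) / n
            + Real.sqrt ((4 / n) * logPlus ((T₁ : ℝ) / n))}) ≤
      ENNReal.ofReal (1 + 4 * logPlus (T₁ * δ ^ 2) / δ ^ 2 + 3 / δ ^ 2
        + Real.sqrt (8 * Real.pi * logPlus (T₁ * δ ^ 2)) / δ ^ 2) := by
  classical
  set L : ℝ := logPlus (T₁ * δ ^ 2) with hLdef
  have hL : 0 ≤ L := logPlus_nonneg' _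
  set c : ℝ := 2 * Real.sqrt L with hcdef
  have hc : 0 ≤ c := by positivity
  have hδ2 : (0:ℝ) < δ ^ 2 := by positivity
  set n₁ : ℕ := ⌈(4*L+1)/δ^2⌉₊ with hn₁def
  have hn₁pos : 0 < n₁ := Nat.ceil_pos.2 (by positivity)
  have hn₁ge : (4*L+1)/δ^2 ≤ (n₁:ℝ) := Nat.le_ceil _
  have hn₁le : (n₁:ℝ) ≤ (4*L+1)/δ^2 + 1 := (Nat.ceil_lt_add_one (by positivity)).le
  have hcn₁ : c ≤ Real.sqrt n₁ * δ := by
    apply sq_le_imp' hc (by positivity)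
    have h1 : c ^ 2 = 4 * L := by
      rw [hcdef, mul_pow, Real.sq_sqrt hL]; norm_num
    have h2 : (Real.sqrt n₁ * δ) ^ 2 = n₁ * δ ^ 2 := by
      rw [mul_pow, Real.sq_sqrt (Nat.cast_nonneg n₁)]
    rw [h1, h2]
    have h3 : 4*L+1 ≤ (n₁:ℝ) * δ^2 := (div_le_iff₀ hδ2).1 hn₁ge
    linarith
  set B : ℕ → ℝ := fun n =>
    if n ≤ n₁ then 1 else Real.exp (-(1/2) * (Real.sqrt n * δ - c) ^ 2) with hB
  have hBnonneg : ∀ n, 0 ≤ B n := by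
    intro n; rw [hB]; dsimp only; split <;> positivity
  have hterm : ∀ n ∈ Finset.Icc 1 T,
      μ {ω | δ ≤ (∑ s ∈ Finset.range n, M s ω) / n
          + Real.sqrt ((4 / n) * logPlus ((T₁ : ℝ) / n))} ≤ ENNReal.ofReal (B n) := by
    intro n hnmem
    rw [Finset.mem_Icc] at hnmem
    by_cases hn : n ≤ n₁
    · rw [hB]; dsimp only; rw [if_pos hn, ENNReal.ofReal_one]
      exact prob_le_one
    · push_neg at hn
      have hn0 : 0 < n := lt_trans hn₁pos hn
      have hnR : (0:ℝ) < n := Nat.cast_pos.2 hn0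
      have hnge : (n₁:ℝ) ≤ (n:ℝ) := Nat.cast_le.2 hn.le
      have hsn : (0:ℝ) < Real.sqrt n := Real.sqrt_pos.2 hnR
      have hmulself : Real.sqrt n * Real.sqrt n = (n:ℝ) := Real.mul_self_sqrt (Nat.cast_nonneg n)
      have hcn : c ≤ Real.sqrt n * δ :=
        le_trans hcn₁ (mul_le_mul_of_nonneg_right (Real.sqrt_le_sqrt hnge) hδ.le)
      have hT₁R : (1:ℝ) ≤ (T₁:ℝ) := by exact_mod_cast hT₁
      have hfrac : (T₁:ℝ) / n ≤ (T₁:ℝ) * δ ^ 2 := by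
        rw [div_le_iff₀ hnR]
        have h4 : (1:ℝ) ≤ (n:ℝ) * δ^2 := by
          have : (1:ℝ)/δ^2 ≤ (4*L+1)/δ^2 := by gcongr; linarith
          have h5 := (div_le_iff₀ hδ2).1 (this.trans (hn₁ge.trans hnge))
          linarith
        nlinarith
      have hlog : logPlus ((T₁:ℝ)/n) ≤ L := logPlus_mono' (by positivity) hfrac
      set a : ℝ := n * δ - Real.sqrt n * c with hadef
      have ha : 0 ≤ a := by
        rw [hadef]; nlinarith [Real.sqrt_nonneg (n:ℝ)]
      have hsubset : {ω | δ ≤ (∑ s ∈ Finset.range n, M s ω) / n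
          + Real.sqrt ((4 / n) * logPlus ((T₁ : ℝ) / n))}
          ⊆ {ω | a ≤ ∑ s ∈ Finset.range n, M s ω} := by
        intro ω hω
        simp only [Set.mem_setOf_eq] at hω ⊢
        have h1 : Real.sqrt ((4 / n) * logPlus ((T₁ : ℝ) / n))
            ≤ Real.sqrt (4 * L / n) := by
          apply Real.sqrt_le_sqrt
          rw [div_mul_eq_mul_div]
          exact (div_le_div_iff_of_pos_right hnR).2 (by linarith)
        have hsqrt4L : Real.sqrt (4 * L) = c := by
          rw [hcdef, show (4:ℝ) * L = 2^2 * L by ring, Real.sqrt_mul (by positivity),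
            Real.sqrt_sq (by norm_num : (0:ℝ) ≤ 2)]
        have h2 : Real.sqrt (4 * L / n) = c / Real.sqrt n := by
          rw [Real.sqrt_div (by positivity : (0:ℝ) ≤ 4 * L), hsqrt4L]
        have h5 : δ - c / Real.sqrt n ≤ (∑ s ∈ Finset.range n, M s ω) / n := by
          rw [h2] at h1
          linarith
        have h6 := (le_div_iff₀ hnR).1 h5
        have hds : (n:ℝ) / Real.sqrt n = Real.sqrt n := Real.div_sqrt
        have h7 : (δ - c / Real.sqrt n) * n = a := by
          rw [hadef, sub_mul, div_mul_eq_mul_div, mul_div_assoc, hds]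
          ring
        linarith [h7 ▸ h6]
      refine le_trans (measure_mono hsubset) ?_
      refine le_trans (chernoff' μ M hmeas hindep hsub hmean n hn0 a ha) ?_
      have haeq : a = Real.sqrt n * (Real.sqrt n * δ - c) := by
        rw [hadef]; linear_combination (-δ) * hmulself
      have ha2 : a ^ 2 / n = (Real.sqrt n * δ - c) ^ 2 := by
        rw [haeq, mul_pow, Real.sq_sqrt (Nat.cast_nonneg n),
          mul_div_cancel_left₀ _ hnR.ne']
      rw [hB]; dsimp only; rw [if_neg (not_le.2 hn), ← ha2]
  have hsqrt8 : Real.sqrt (8 * Real.pi * L) = c * Real.sqrt (2 * Real.pi) := by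
    rw [show (8:ℝ) * Real.pi * L = 2^2 * L * (2 * Real.pi) by ring,
      Real.sqrt_mul (by positivity) (2 * Real.pi),
      Real.sqrt_mul (by norm_num : (0:ℝ) ≤ 2^2) L,
      Real.sqrt_sq (by norm_num : (0:ℝ) ≤ 2), hcdef]
  have hreal : ∑ n ∈ Finset.Icc 1 T, B n
      ≤ 1 + 4 * L / δ ^ 2 + 3 / δ ^ 2 + Real.sqrt (8 * Real.pi * L) / δ ^ 2 := by
    rw [← Finset.sum_filter_add_sum_filter_not (Finset.Icc 1 T) (fun n => n ≤ n₁) B]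
    have hpart1 : ∑ n ∈ (Finset.Icc 1 T).filter (fun n => n ≤ n₁), B n ≤ (n₁:ℝ) := by
      have e1 : ∀ n ∈ (Finset.Icc 1 T).filter (fun n => n ≤ n₁), B n = 1 := by
        intro n hn
        rw [hB]; dsimp only
        exact if_pos (Finset.mem_filter.1 hn).2
      rw [Finset.sum_congr rfl e1, Finset.sum_const, nsmul_eq_mul, mul_one]
      have hsub2 : (Finset.Icc 1 T).filter (fun n => n ≤ n₁) ⊆ Finset.Icc 1 n₁ := by
        intro x hx
        rw [Finset.mem_filter, Finset.mem_Icc] at hx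
        rw [Finset.mem_Icc]
        exact ⟨hx.1.1, hx.2⟩
      have := Finset.card_le_card hsub2
      rw [Nat.card_Icc] at this
      exact_mod_cast le_trans (Nat.cast_le.2 this) (by norm_num)
    have hpart2eq : (Finset.Icc 1 T).filter (fun n => ¬ n ≤ n₁) = Finset.Icc (n₁+1) T := by
      ext n
      simp only [Finset.mem_filter, Finset.mem_Icc, not_le]
      omega
    have hpart2 : ∑ n ∈ (Finset.Icc 1 T).filter (fun n => ¬ n ≤ n₁), B n
        ≤ 2 / δ ^ 2 + c * Real.sqrt (2 * Real.pi) / δ ^ 2 := by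
      rw [hpart2eq]
      have e2 : ∀ n ∈ Finset.Icc (n₁+1) T, B n
          = Real.exp (-(1/2) * (Real.sqrt n * δ - c) ^ 2) := by
        intro n hn
        rw [Finset.mem_Icc] at hn
        rw [hB]; dsimp only
        exact if_neg (by omega)
      rw [Finset.sum_congr rfl e2]
      exact tailSum' T n₁ δ c hδ hc hn₁pos hcn₁
    have harith : (4*L+1)/δ^2 + 1 + 2/δ^2 = 1 + 4*L/δ^2 + 3/δ^2 := by
      field_simp
      ring
    rw [hsqrt8]
    linarith
  calc (∑ n ∈ Finset.Icc 1 T,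
        μ {ω | δ ≤ (∑ s ∈ Finset.range n, M s ω) / n
            + Real.sqrt ((4 / n) * logPlus ((T₁ : ℝ) / n))})
      ≤ ∑ n ∈ Finset.Icc 1 T, ENNReal.ofReal (B n) := Finset.sum_le_sum hterm
    _ = ENNReal.ofReal (∑ n ∈ Finset.Icc 1 T, B n) :=
        (ENNReal.ofReal_sum_of_nonneg (fun n _ => hBnonneg n)).symm
    _ ≤ ENNReal.ofReal (1 + 4 * logPlus (T₁ * δ ^ 2) / δ ^ 2 + 3 / δ ^ 2
        + Real.sqrt (8 * Real.pi * logPlus (T₁ * δ ^ 2)) / δ ^ 2) :=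
        ENNReal.ofReal_le_ofReal hreal
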